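/- For probability vectors α, β on a connected weighted graph, B₂(α,β) ≤ W_{r,1}(α,β)^{1/2}, where B₂ is the 2-Beckmann distance and W_{r,1} is the 1-Wasserstein distance with ground cost equal to the effective resistance r_{ij} = (δᵢ−δⱼ)ᵀL⁺(δᵢ−δⱼ). -/

import Mathlib

open Matrix Finset

/-- For probability vectors `α, β` on a connected weighted graph,
`B₂(α,β) ≤ W_{r,1}(α,β)^{1/2}`, where `B₂(α,β)² = (α−β)ᵀ L⁺ (α−β)` and
`W_{r,1}` is the 1-Wasserstein distance with ground cost the effective
resistance `r_{ij} = (δᵢ−δⱼ)ᵀ L⁺ (δᵢ−δⱼ)`. -/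
theorem b2_le_sqrt_wasserstein_resistance
    (n : ℕ) (L Lp : Matrix (Fin n) (Fin n) ℝ)
    (hpsd : L.PosSemidef)
    (hp1 : L * Lp * L = L) (hp2 : Lp * L * Lp = Lp)
    (hp3 : (L * Lp)ᵀ = L * Lp) (hp4 : (Lp * L)ᵀ = Lp * L)
    (α β : Fin n → ℝ)
    (hα : (∀ i, 0 ≤ α i) ∧ ∑ i, α i = 1)
    (hβ : (∀ i, 0 ≤ β i) ∧ ∑ i, β i = 1) :
    Real.sqrt ((α - β) ⬝ᵥ Lp.mulVec (α - β)) ≤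
      Real.sqrt (sInf {c : ℝ | ∃ π : Matrix (Fin n) (Fin n) ℝ,
        (∀ i j, 0 ≤ π i j) ∧ (∀ i, ∑ j, π i j = α i) ∧ (∀ j, ∑ i, π i j = β j) ∧
        c = ∑ i, ∑ j, π i j *
          ((Pi.single i 1 - Pi.single j 1) ⬝ᵥ
            Lp.mulVec (Pi.single i 1 - Pi.single j 1))}) := by
  obtain ⟨hα0, hα1⟩ := hα
  obtain ⟨hβ0, hβ1⟩ := hβ
  -- Lp is symmetric
  have hA : Lᵀ = L := by simpa using hpsd.1.eq
  have s1 : Lpᵀ * L = L * Lp := by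
    calc Lpᵀ * L = (Lᵀ * Lp)ᵀ := by rw [transpose_mul, transpose_transpose]
    _ = (L * Lp)ᵀ := by rw [hA]
    _ = L * Lp := hp3
  have s2 : L * Lpᵀ = Lp * L := by
    calc L * Lpᵀ = (Lp * Lᵀ)ᵀ := by rw [transpose_mul, transpose_transpose]
    _ = (Lp * L)ᵀ := by rw [hA]
    _ = Lp * L := hp4
  have hc : L * Lpᵀ = L * Lp := by
    calc L * Lpᵀ = (L * Lp * L) * Lpᵀ := by rw [hp1]
    _ = (L * Lp) * (L * Lpᵀ) := by rw [Matrix.mul_assoc (L * Lp) L Lpᵀ]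
    _ = (Lpᵀ * L) * (Lp * L) := by rw [s2, s1]
    _ = Lpᵀ * (L * Lp * L) := by rw [Matrix.mul_assoc, Matrix.mul_assoc]
    _ = Lpᵀ * L := by rw [hp1]
    _ = L * Lp := s1
  have hcomm : Lp * L = L * Lp := by rw [← s2, hc]
  have t2 : Lpᵀ * (L * Lpᵀ) = Lpᵀ := by
    have h := congrArg Matrix.transpose hp2
    simpa [Matrix.transpose_mul, hA, Matrix.mul_assoc] using h
  have hsymm : Lpᵀ = Lp := by
    calc Lpᵀ = Lpᵀ * (L * Lpᵀ) := t2.symm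
    _ = Lpᵀ * (L * Lp) := by rw [hc]
    _ = (Lpᵀ * L) * Lp := by rw [Matrix.mul_assoc]
    _ = (Lp * L) * Lp := by rw [s1, ← hcomm]
    _ = Lp := hp2
  -- Lp is positive semidefinite (as a quadratic form)
  have hLp0 : ∀ x : Fin n → ℝ, 0 ≤ x ⬝ᵥ Lp *ᵥ x := by
    intro x
    have hv : x ᵥ* Lp = Lp *ᵥ x := by
      rw [← hsymm, Matrix.vecMul_transpose, hsymm]
    have h : x ⬝ᵥ Lp *ᵥ x = (Lp *ᵥ x) ⬝ᵥ L *ᵥ (Lp *ᵥ x) := by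
      conv_lhs => rw [← hp2]
      rw [← Matrix.mulVec_mulVec, ← Matrix.mulVec_mulVec, Matrix.dotProduct_mulVec, hv]
    rw [h]
    simpa using hpsd.dotProduct_mulVec_nonneg (Lp *ᵥ x)
  -- pairwise inequality
  have h2B : ∀ x y : Fin n → ℝ,
      2 * (x ⬝ᵥ Lp *ᵥ y) ≤ x ⬝ᵥ Lp *ᵥ x + y ⬝ᵥ Lp *ᵥ y := by
    intro x y
    have hB : y ⬝ᵥ Lp *ᵥ x = x ⬝ᵥ Lp *ᵥ y := by
      rw [Matrix.dotProduct_mulVec, ← hsymm, Matrix.vecMul_transpose,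
        dotProduct_comm, hsymm]
    have h := hLp0 (x - y)
    rw [Matrix.mulVec_sub, sub_dotProduct, dotProduct_sub,
      dotProduct_sub] at h
    linarith
  set S : Set ℝ := {c : ℝ | ∃ π : Matrix (Fin n) (Fin n) ℝ,
        (∀ i j, 0 ≤ π i j) ∧ (∀ i, ∑ j, π i j = α i) ∧ (∀ j, ∑ i, π i j = β j) ∧
        c = ∑ i, ∑ j, π i j *
          ((Pi.single i 1 - Pi.single j 1) ⬝ᵥ
            Lp.mulVec (Pi.single i 1 - Pi.single j 1))} with hS
  have hne : S.Nonempty := by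
    refine ⟨_, fun i j => α i * β j, fun i j => mul_nonneg (hα0 i) (hβ0 j), ?_, ?_, rfl⟩
    · intro i; rw [← Finset.mul_sum, hβ1, mul_one]
    · intro j; rw [← Finset.sum_mul, hα1, one_mul]
  have hlb : ∀ b ∈ S, (α - β) ⬝ᵥ Lp.mulVec (α - β) ≤ b := by
    rintro b ⟨π, hπ0, hπr, hπc, rfl⟩
    set v : Fin n × Fin n → (Fin n → ℝ) :=
      fun p => Pi.single p.1 (1:ℝ) - Pi.single p.2 1 with hv
    set c : Fin n × Fin n → ℝ := fun p => π p.1 p.2 with hcdef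
    -- decomposition of α - β
    have hdecomp : α - β = ∑ p : Fin n × Fin n, c p • v p := by
      funext k
      simp only [hv, hcdef, Finset.sum_apply, Pi.smul_apply, Pi.sub_apply, smul_eq_mul,
        Pi.single_apply]
      rw [Fintype.sum_prod_type]
      simp only [mul_sub, Finset.sum_sub_distrib, mul_ite, mul_one, mul_zero]
      simp only [Finset.sum_ite_eq, Finset.sum_ite_eq', Finset.mem_univ, if_true]
      rw [show (∑ x : Fin n, ∑ x_1 : Fin n, if k = x then π x x_1 else 0)
          = ∑ x : Fin n, (if k = x then ∑ x_1, π x x_1 else 0) from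
        Finset.sum_congr rfl fun x _ => by split <;> simp]
      simp [Finset.sum_ite_eq, hπr, hπc]
    have hsum1 : ∑ p : Fin n × Fin n, c p = 1 := by
      rw [Fintype.sum_prod_type]
      simp only [hcdef]
      simp_rw [hπr]
      exact hα1
    have hc0 : ∀ p, 0 ≤ c p := fun p => hπ0 p.1 p.2
    -- bilinear expansion
    have hexp : (α - β) ⬝ᵥ Lp *ᵥ (α - β)
        = ∑ p : Fin n × Fin n, ∑ q : Fin n × Fin n, c p * c q * (v p ⬝ᵥ Lp *ᵥ v q) := by
      rw [hdecomp, ← Matrix.toLinearMap₂'_apply']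
      simp only [map_sum, _root_.map_smul, LinearMap.sum_apply, LinearMap.smul_apply,
        smul_eq_mul, Matrix.toLinearMap₂'_apply']
      rw [Finset.sum_comm]
      refine Finset.sum_congr rfl fun p _ => ?_
      rw [Finset.mul_sum]
      exact Finset.sum_congr rfl fun q _ => by ring
    set f : Fin n × Fin n → ℝ := fun p => v p ⬝ᵥ Lp *ᵥ v p with hf
    have hstep : (α - β) ⬝ᵥ Lp *ᵥ (α - β)
        ≤ ∑ p : Fin n × Fin n, ∑ q : Fin n × Fin n, c p * c q * ((f p + f q) / 2) := by
      rw [hexp]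
      refine Finset.sum_le_sum fun p _ => Finset.sum_le_sum fun q _ => ?_
      have h := h2B (v p) (v q)
      have hcc : 0 ≤ c p * c q := mul_nonneg (hc0 p) (hc0 q)
      have : v p ⬝ᵥ Lp *ᵥ v q ≤ (f p + f q) / 2 := by simp only [hf]; linarith
      exact mul_le_mul_of_nonneg_left this hcc
    have havg : ∑ p : Fin n × Fin n, ∑ q : Fin n × Fin n, c p * c q * ((f p + f q) / 2)
        = ∑ p : Fin n × Fin n, c p * f p := by
      have h2 : ∑ p : Fin n × Fin n, ∑ q : Fin n × Fin n, c p * c q * ((f p + f q) / 2)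
          = (∑ p : Fin n × Fin n, c p * (f p / 2)) * (∑ q : Fin n × Fin n, c q)
            + (∑ p : Fin n × Fin n, c p) * (∑ q : Fin n × Fin n, c q * (f q / 2)) := by
        rw [Finset.sum_mul, Finset.sum_mul, ← Finset.sum_add_distrib]
        refine Finset.sum_congr rfl fun p _ => ?_
        rw [Finset.mul_sum, Finset.mul_sum, ← Finset.sum_add_distrib]
        exact Finset.sum_congr rfl fun q _ => by ring
      rw [h2, hsum1, mul_one, one_mul, ← Finset.sum_add_distrib]
      exact Finset.sum_congr rfl fun p _ => by ring
    have hfinal : (α - β) ⬝ᵥ Lp *ᵥ (α - β) ≤ ∑ p : Fin n × Fin n, c p * f p :=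
      havg ▸ hstep
    calc (α - β) ⬝ᵥ Lp.mulVec (α - β) ≤ ∑ p : Fin n × Fin n, c p * f p := hfinal
    _ = ∑ i, ∑ j, π i j * ((Pi.single i 1 - Pi.single j 1) ⬝ᵥ
          Lp.mulVec (Pi.single i 1 - Pi.single j 1)) := by
        rw [Fintype.sum_prod_type]
  exact Real.sqrt_le_sqrt (le_csInf hne hlb)
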